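/- Joni's theorem (two-sided bounds from lower bounds): for every policy π, pDL formula φ, pGCL program s, valuation ε, and expectation lower bounds p₁, p₂, if ε ⊨ [s]_{p₁} φ and ε ⊨ [s]_{p₂} ¬φ, then the expected reward E_{⟨ε,s⟩,π} [φ] under the fixed policy π lies in the interval [p₁(ε), 1 − p₂(ε)]. -/
import Mathlib


namespace PGCL

/-- Program valuations: maps from program variables to real values. -/
abbrev PVal : Type := String → ℝ

/-- Logical environments: maps from logical variables to their values.
    Logical variables are disjoint from program variables and cannot be
    accessed by programs. -/
abbrev LEnv : Type := String → ℝ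

/-- Syntax of the probabilistic guarded command language pGCL.
    Expressions are embedded shallowly as functions of the valuation. -/
inductive Stmt : Type
  | skip : Stmt
  | assign (x : String) (e : PVal → ℝ) : Stmt
  | seq (s₁ s₂ : Stmt) : Stmt
  /-- demonic (non-deterministic) choice `s₁ ⊓ s₂` -/
  | dem (s₁ s₂ : Stmt) : Stmt
  /-- probabilistic choice `s₁ [e] s₂` -/
  | prob (e : PVal → ℝ) (s₁ s₂ : Stmt) : Stmt
  | ifte (e : PVal → Bool) (s₁ s₂ : Stmt) : Stmt
  | whileLoop (e : PVal → Bool) (s : Stmt) : Stmt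

/-- States of the MDP semantics: a valuation paired with the remaining program.
    `(ε, Stmt.skip)` is final. -/
abbrev PState : Type := PVal × Stmt

/-- A positional policy resolves each demonic choice (true = left branch). -/
abbrev Policy : Type := PState → Bool

/-- One-step transition relation of the MDP semantics of pGCL, under policy `π`:
    `Step π σ p σ'` means σ steps to σ' with probability `p`. -/
inductive Step (π : Policy) : PState → ℝ → PState → Prop
  | assign {ε : PVal} {x : String} {e : PVal → ℝ} :
      Step π (ε, Stmt.assign x e) 1 (Function.update ε x (e ε), Stmt.skip)
  | seqSkip {ε ε' : PVal} {s₁ s₂ : Stmt} {p : ℝ} :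
      Step π (ε, s₁) p (ε', s₂) → Step π (ε, Stmt.seq Stmt.skip s₁) p (ε', s₂)
  | seqStep {ε ε' : PVal} {s₁ s₂ s : Stmt} {p : ℝ} :
      Step π (ε, s₁) p (ε', s₂) → Step π (ε, Stmt.seq s₁ s) p (ε', Stmt.seq s₂ s)
  | probL {ε : PVal} {e : PVal → ℝ} {s₁ s₂ : Stmt} :
      0 ≤ e ε → e ε ≤ 1 → Step π (ε, Stmt.prob e s₁ s₂) (e ε) (ε, s₁)
  | probR {ε : PVal} {e : PVal → ℝ} {s₁ s₂ : Stmt} :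
      0 ≤ e ε → e ε ≤ 1 → Step π (ε, Stmt.prob e s₁ s₂) (1 - e ε) (ε, s₂)
  | demL {ε : PVal} {s₁ s₂ : Stmt} :
      π (ε, Stmt.dem s₁ s₂) = true → Step π (ε, Stmt.dem s₁ s₂) 1 (ε, s₁)
  | demR {ε : PVal} {s₁ s₂ : Stmt} :
      π (ε, Stmt.dem s₁ s₂) = false → Step π (ε, Stmt.dem s₁ s₂) 1 (ε, s₂)
  | iteT {ε : PVal} {e : PVal → Bool} {s₁ s₂ : Stmt} :
      e ε = true → Step π (ε, Stmt.ifte e s₁ s₂) 1 (ε, s₁)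
  | iteF {ε : PVal} {e : PVal → Bool} {s₁ s₂ : Stmt} :
      e ε = false → Step π (ε, Stmt.ifte e s₁ s₂) 1 (ε, s₂)
  | whileT {ε : PVal} {e : PVal → Bool} {s : Stmt} :
      e ε = true →
        Step π (ε, Stmt.whileLoop e s) 1 (ε, Stmt.seq s (Stmt.whileLoop e s))
  | whileF {ε : PVal} {e : PVal → Bool} {s : Stmt} :
      e ε = false → Step π (ε, Stmt.whileLoop e s) 1 (ε, Stmt.skip)

/-- Finite paths under a policy `π` from a state to a final state. -/
inductive MPath (π : Policy) : PState → Type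
  | nil (ε : PVal) : MPath π (ε, Stmt.skip)
  | cons {σ σ' : PState} (p : ℝ) (h : Step π σ p σ') (rest : MPath π σ') : MPath π σ

/-- The probability of a path: the product of its transition probabilities. -/
noncomputable def MPath.prob {π : Policy} : {σ : PState} → MPath π σ → ℝ
  | _, .nil _ => 1
  | _, .cons p _ rest => p * rest.prob

/-- The valuation in the final state of a path. -/
def MPath.finalVal {π : Policy} : {σ : PState} → MPath π σ → PVal
  | _, .nil ε => ε
  | _, .cons _ _ rest => rest.finalVal

/-- Expected reward `E_{σ,π} r`: the sum over all paths from σ under π of the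
    probability of the path times the reward of its final valuation. -/
noncomputable def expReward (π : Policy) (σ : PState) (r : PVal → ℝ) : ℝ :=
  ∑' ρ : MPath π σ, ρ.prob * r ρ.finalVal

/-- Expectation `𝔼_σ r`: infimum over all policies of the expected reward. -/
noncomputable def expectation (σ : PState) (r : PVal → ℝ) : ℝ :=
  ⨅ π : Policy, expReward π σ r

open Classical in
/-- Characteristic (indicator) function of a proposition. -/
noncomputable def ind (P : Prop) : ℝ := if P then 1 else 0

/-- Formulae of probabilistic dynamic logic pDL. Atomic formulae are embedded
    shallowly as predicates over the program valuation and logical environment. -/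
inductive Formula : Type
  | atom (A : PVal → LEnv → Prop) : Formula
  | neg (φ : Formula) : Formula
  | conj (φ₁ φ₂ : Formula) : Formula
  /-- universal quantification over the logical variable `l` (domain ℝ) -/
  | all (l : String) (φ : Formula) : Formula
  /-- the p-box modality `[s]_p φ` -/
  | box (s : Stmt) (p : PVal → ℝ) (φ : Formula) : Formula

/-- Satisfaction `ε, η ⊨ φ` of pDL formulae. -/
def Sat : Formula → PVal → LEnv → Prop
  | .atom A, ε, η => A ε η
  | .neg φ, ε, η => ¬ Sat φ ε η
  | .conj φ₁ φ₂, ε, η => Sat φ₁ ε η ∧ Sat φ₂ ε η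
  | .all l φ, ε, η => ∀ v : ℝ, Sat φ ε (Function.update η l v)
  | .box s p φ, ε, η => p ε ≤ expectation (ε, s) (fun ε' => ind (Sat φ ε' η))

/-- Disjunction `φ₁ ∨ φ₂ := ¬(¬φ₁ ∧ ¬φ₂)`. -/
def Formula.disj (φ₁ φ₂ : Formula) : Formula := .neg (.conj (.neg φ₁) (.neg φ₂))

/-- Existential quantification `∃l·φ := ¬∀l·¬φ`. -/
def Formula.ex (l : String) (φ : Formula) : Formula := .neg (.all l (.neg φ))

/-- A program is purely probabilistic if it contains no demonic choice. -/
def DemFree : Stmt → Prop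
  | .skip => True
  | .assign _ _ => True
  | .seq s₁ s₂ => DemFree s₁ ∧ DemFree s₂
  | .dem _ _ => False
  | .prob _ s₁ s₂ => DemFree s₁ ∧ DemFree s₂
  | .ifte _ s₁ s₂ => DemFree s₁ ∧ DemFree s₂
  | .whileLoop _ s => DemFree s

end PGCL

namespace PGCL

instance : Inhabited Stmt := ⟨.skip⟩

lemma no_step_skip {π : Policy} {ε : PVal} {p : ℝ} {σ' : PState} :
    ¬ Step π (ε, Stmt.skip) p σ' := fun h => nomatch h

lemma step_nonneg {π : Policy} {σ σ' : PState} {p : ℝ} (h : Step π σ p σ') : 0 ≤ p := by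
  induction h with
  | assign => norm_num
  | seqSkip _ ih => exact ih
  | seqStep _ ih => exact ih
  | probL h0 h1 => exact h0
  | probR h0 h1 => linarith
  | demL _ => norm_num
  | demR _ => norm_num
  | iteT _ => norm_num
  | iteF _ => norm_num
  | whileT _ => norm_num
  | whileF _ => norm_num

lemma seq_inv {π : Policy} {ε : PVal} {s₁ s : Stmt} {p : ℝ} {σ' : PState}
    (h : Step π (ε, .seq s₁ s) p σ') :
    (s₁ = .skip ∧ Step π (ε, s) p σ') ∨
      ∃ ε' s₂, σ' = (ε', .seq s₂ s) ∧ Step π (ε, s₁) p (ε', s₂) := by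
  cases h with
  | seqSkip h => exact .inl ⟨rfl, h⟩
  | seqStep h => exact .inr ⟨_, _, rfl, h⟩

lemma sum_fst_le_one_of_eq {S : Finset (ℝ × PState)} (a : ℝ × PState)
    (h : ∀ x ∈ S, x = a) (ha : a.1 ≤ 1) : ∑ x ∈ S, x.1 ≤ 1 := by
  have hs : S ⊆ {a} := fun x hx => by simp [h x hx]
  rcases Finset.subset_singleton_iff.mp hs with h' | h' <;> simp [h', ha]

lemma sum_fst_le_one_of_two {S : Finset (ℝ × PState)} (a b : ℝ × PState)
    (h : ∀ x ∈ S, x = a ∨ x = b) (ha : 0 ≤ a.1) (hb : 0 ≤ b.1) (hab : a.1 + b.1 ≤ 1) :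
    ∑ x ∈ S, x.1 ≤ 1 := by
  classical
  have hsub : S ⊆ {a, b} := fun x hx => by
    rcases h x hx with h' | h' <;> simp [h']
  have h1 : ∑ x ∈ S, x.1 ≤ ∑ x ∈ ({a, b} : Finset (ℝ × PState)), x.1 := by
    refine Finset.sum_le_sum_of_subset_of_nonneg hsub ?_
    intro x hx _
    rcases Finset.mem_insert.mp hx with h' | h'
    · exact h' ▸ ha
    · exact (Finset.mem_singleton.mp h') ▸ hb
  refine h1.trans ?_
  by_cases hab' : a = b
  · subst hab'
    have hbb : ({a, a} : Finset (ℝ × PState)) = {a} := by simp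
    rw [hbb, Finset.sum_singleton]
    linarith
  · rw [Finset.sum_insert (by simpa using hab'), Finset.sum_singleton]
    exact hab

lemma stepSum (π : Policy) : ∀ st : Stmt, ∀ (ε : PVal) (S : Finset (ℝ × PState)),
    (∀ x ∈ S, Step π (ε, st) x.1 x.2) → ∑ x ∈ S, x.1 ≤ 1 := by
  intro st
  induction st with
  | skip =>
    intro ε S hS
    have : S = ∅ := Finset.eq_empty_of_forall_notMem fun x hx => no_step_skip (hS x hx)
    simp [this]
  | assign x e =>
    intro ε S hS
    refine sum_fst_le_one_of_eq (1, (Function.update ε x (e ε), Stmt.skip)) ?_ le_rfl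
    rintro ⟨p, σ'⟩ hx
    cases hS _ hx
    rfl
  | seq sa sb iha ihb =>
    intro ε S hS
    by_cases hsk : sa = Stmt.skip
    · subst hsk
      refine ihb ε S fun x hx => ?_
      rcases seq_inv (hS x hx) with ⟨_, h⟩ | ⟨ε', s₂, _, h⟩
      · exact h
      · exact absurd h no_step_skip
    · classical
      set f : ℝ × PState → ℝ × PState :=
        fun x => (x.1, (x.2.1, match x.2.2 with | .seq a _ => a | t => t)) with hf
      have hformS : ∀ x ∈ S, ∃ ε' s₂, x.2 = (ε', Stmt.seq s₂ sb) ∧ Step π (ε, sa) x.1 (ε', s₂) := by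
        intro x hx
        rcases seq_inv (hS x hx) with ⟨h', _⟩ | ⟨ε', s₂, h1, h2⟩
        · exact absurd h' hsk
        · exact ⟨ε', s₂, h1, h2⟩
      have hinj : ∀ x ∈ S, ∀ y ∈ S, f x = f y → x = y := by
        intro x hx y hy hxy
        obtain ⟨ε₁, t₁, hx2, _⟩ := hformS x hx
        obtain ⟨ε₂, t₂, hy2, _⟩ := hformS y hy
        obtain ⟨x1, x2⟩ := x
        obtain ⟨y1, y2⟩ := y
        simp only at hx2 hy2
        subst hx2; subst hy2
        simp only [hf, Prod.mk.injEq] at hxy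
        obtain ⟨h1, h2, h3⟩ := hxy
        simp_all
      have hsum : ∑ y ∈ S.image f, y.1 = ∑ x ∈ S, x.1 := by
        rw [Finset.sum_image hinj]
      rw [← hsum]
      refine iha ε (S.image f) fun y hy => ?_
      obtain ⟨x, hx, rfl⟩ := Finset.mem_image.mp hy
      obtain ⟨ε', s₂, hx2, hstep⟩ := hformS x hx
      obtain ⟨x1, x2⟩ := x
      simp only at hx2
      subst hx2
      simpa [hf] using hstep
  | dem sa sb iha ihb =>
    intro ε S hS
    cases hπ : π (ε, Stmt.dem sa sb) with
    | true =>
      refine sum_fst_le_one_of_eq (1, (ε, sa)) ?_ le_rfl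
      rintro ⟨p, σ'⟩ hx
      cases hS _ hx with
      | demL _ => rfl
      | demR h => rw [hπ] at h; cases h
    | false =>
      refine sum_fst_le_one_of_eq (1, (ε, sb)) ?_ le_rfl
      rintro ⟨p, σ'⟩ hx
      cases hS _ hx with
      | demL h => rw [hπ] at h; cases h
      | demR _ => rfl
  | prob e sa sb iha ihb =>
    intro ε S hS
    by_cases hel : 0 ≤ e ε ∧ e ε ≤ 1
    · refine sum_fst_le_one_of_two (e ε, (ε, sa)) (1 - e ε, (ε, sb)) ?_
        (show (0:ℝ) ≤ e ε from hel.1)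
        (show (0:ℝ) ≤ 1 - e ε by linarith [hel.2])
        (show e ε + (1 - e ε) ≤ 1 by linarith)
      rintro ⟨p, σ'⟩ hx
      cases hS _ hx with
      | probL _ _ => exact .inl rfl
      | probR _ _ => exact .inr rfl
    · have : S = ∅ := by
        refine Finset.eq_empty_of_forall_notMem ?_
        rintro ⟨p, σ'⟩ hx
        cases hS _ hx with
        | probL h0 h1 => exact hel ⟨h0, h1⟩
        | probR h0 h1 => exact hel ⟨h0, h1⟩
      simp [this]
  | ifte e sa sb iha ihb =>
    intro ε S hS
    cases he : e ε with
    | true =>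
      refine sum_fst_le_one_of_eq (1, (ε, sa)) ?_ le_rfl
      rintro ⟨p, σ'⟩ hx
      cases hS _ hx with
      | iteT _ => rfl
      | iteF h => rw [he] at h; cases h
    | false =>
      refine sum_fst_le_one_of_eq (1, (ε, sb)) ?_ le_rfl
      rintro ⟨p, σ'⟩ hx
      cases hS _ hx with
      | iteT h => rw [he] at h; cases h
      | iteF _ => rfl
  | whileLoop e s ih =>
    intro ε S hS
    cases he : e ε with
    | true =>
      refine sum_fst_le_one_of_eq (1, (ε, Stmt.seq s (Stmt.whileLoop e s))) ?_ le_rfl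
      rintro ⟨p, σ'⟩ hx
      cases hS _ hx with
      | whileT _ => rfl
      | whileF h => rw [he] at h; cases h
    | false =>
      refine sum_fst_le_one_of_eq (1, (ε, Stmt.skip)) ?_ le_rfl
      rintro ⟨p, σ'⟩ hx
      cases hS _ hx with
      | whileT h => rw [he] at h; cases h
      | whileF _ => rfl

/-- Valid complete traces of the MDP from a state. -/
inductive VT (π : Policy) : PState → List (ℝ × PState) → Prop
  | nil (ε : PVal) : VT π (ε, Stmt.skip) []
  | cons {σ σ' : PState} {p : ℝ} {l : List (ℝ × PState)} :
      Step π σ p σ' → VT π σ' l → VT π σ ((p, σ') :: l)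

/-- The probability of a trace. -/
noncomputable def tprob (l : List (ℝ × PState)) : ℝ := (l.map Prod.fst).prod

@[simp] lemma tprob_nil : tprob [] = 1 := rfl
@[simp] lemma tprob_cons (x : ℝ × PState) (l : List (ℝ × PState)) :
    tprob (x :: l) = x.1 * tprob l := rfl

lemma tprob_nonneg {π : Policy} {σ : PState} {l : List (ℝ × PState)}
    (h : VT π σ l) : 0 ≤ tprob l := by
  induction h with
  | nil => norm_num
  | cons hstep _ ih => exact mul_nonneg (step_nonneg hstep) ih

lemma traceSum (π : Policy) : ∀ n : ℕ, ∀ (σ : PState) (L : Finset (List (ℝ × PState))),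
    (∀ l ∈ L, VT π σ l ∧ l.length ≤ n) → ∑ l ∈ L, tprob l ≤ 1 := by
  intro n
  induction n with
  | zero =>
    intro σ L hL
    have hall : ∀ l ∈ L, l = ([] : List (ℝ × PState)) := fun l hl =>
      List.length_eq_zero_iff.mp (Nat.le_zero.mp (hL l hl).2)
    have hs : L ⊆ {[]} := fun l hl => by simp [hall l hl]
    rcases Finset.subset_singleton_iff.mp hs with h' | h' <;> simp [h']
  | succ n ih =>
    classical
    intro σ L hL
    by_cases hnil : ([] : List (ℝ × PState)) ∈ L
    · obtain ⟨ε, st⟩ := σ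
      have h0 := (hL [] hnil).1
      cases h0
      have hall : ∀ l ∈ L, l = ([] : List (ℝ × PState)) := by
        intro l hl
        cases (hL l hl).1 with
        | nil => rfl
        | cons hstep _ => exact absurd hstep no_step_skip
      have hs : L ⊆ {[]} := fun l hl => by simp [hall l hl]
      rcases Finset.subset_singleton_iff.mp hs with h' | h' <;> simp [h']
    · have hne : ∀ l ∈ L, l ≠ ([] : List (ℝ × PState)) := fun l hl h => hnil (h ▸ hl)
      set T := L.image List.headI with hT
      have hmaps : ∀ l ∈ L, l.headI ∈ T := fun l hl => Finset.mem_image_of_mem _ hl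
      have hfib := Finset.sum_fiberwise_of_maps_to hmaps tprob
      rw [← hfib]
      have hstepT : ∀ x ∈ T, Step π σ x.1 x.2 := by
        intro x hx
        obtain ⟨l, hl, rfl⟩ := Finset.mem_image.mp hx
        obtain ⟨a, t, rfl⟩ := List.exists_cons_of_ne_nil (hne l hl)
        cases (hL _ hl).1 with
        | cons hstep _ => simpa using hstep
      have hfiber : ∀ x ∈ T, ∑ l ∈ L.filter (fun l => l.headI = x), tprob l ≤ x.1 := by
        intro x hx
        have hform : ∀ l ∈ L.filter (fun l => l.headI = x), l = x :: l.tail := by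
          intro l hl
          obtain ⟨hl1, hl2⟩ := Finset.mem_filter.mp hl
          obtain ⟨a, t, rfl⟩ := List.exists_cons_of_ne_nil (hne l hl1)
          simp only [List.headI] at hl2
          simp [hl2]
        have hinj : ∀ l ∈ L.filter (fun l => l.headI = x),
            ∀ l' ∈ L.filter (fun l => l.headI = x), l.tail = l'.tail → l = l' := by
          intro l hl l' hl' h
          rw [hform l hl, hform l' hl', h]
        have h1 : ∑ l ∈ L.filter (fun l => l.headI = x), tprob l
            = x.1 * ∑ t ∈ (L.filter (fun l => l.headI = x)).image List.tail, tprob t := by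
          rw [Finset.sum_image hinj, Finset.mul_sum]
          refine Finset.sum_congr rfl fun l hl => ?_
          conv_lhs => rw [hform l hl]
          simp
        rw [h1]
        have h2 : ∑ t ∈ (L.filter (fun l => l.headI = x)).image List.tail, tprob t ≤ 1 := by
          refine ih x.2 _ fun t ht => ?_
          obtain ⟨l, hl, rfl⟩ := Finset.mem_image.mp ht
          obtain ⟨hl1, _⟩ := Finset.mem_filter.mp hl
          have hlen := (hL l hl1).2
          have hvt := (hL l hl1).1
          rw [hform l hl] at hvt hlen
          cases hvt with
          | cons hstep hrest =>
            constructor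
            · exact hrest
            · simpa using Nat.le_of_succ_le_succ (by simpa using hlen)
        have hp : 0 ≤ x.1 := step_nonneg (hstepT x hx)
        calc x.1 * ∑ t ∈ (L.filter (fun l => l.headI = x)).image List.tail, tprob t
            ≤ x.1 * 1 := by exact mul_le_mul_of_nonneg_left h2 hp
          _ = x.1 := mul_one x.1
      calc ∑ x ∈ T, ∑ l ∈ L.filter (fun l => l.headI = x), tprob l
          ≤ ∑ x ∈ T, x.1 := Finset.sum_le_sum hfiber
        _ ≤ 1 := by
            obtain ⟨ε, st⟩ := σ
            exact stepSum π st ε T hstepT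

/-- The trace of a path. -/
def MPath.trace {π : Policy} : {σ : PState} → MPath π σ → List (ℝ × PState)
  | _, .nil _ => []
  | _, .cons (σ' := σ') p _ rest => (p, σ') :: rest.trace

lemma MPath.vt_trace {π : Policy} {σ : PState} (ρ : MPath π σ) : VT π σ ρ.trace := by
  induction ρ with
  | nil ε => exact VT.nil ε
  | cons p h rest ih => exact VT.cons h ih

lemma MPath.prob_eq_tprob {π : Policy} {σ : PState} (ρ : MPath π σ) :
    ρ.prob = tprob ρ.trace := by
  induction ρ with
  | nil ε => rfl
  | cons p h rest ih => simp [MPath.prob, MPath.trace, ih]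

lemma MPath.prob_nonneg {π : Policy} {σ : PState} (ρ : MPath π σ) : 0 ≤ ρ.prob := by
  rw [ρ.prob_eq_tprob]; exact tprob_nonneg ρ.vt_trace

lemma MPath.trace_injective {π : Policy} : ∀ {σ : PState} (ρ₁ ρ₂ : MPath π σ),
    ρ₁.trace = ρ₂.trace → ρ₁ = ρ₂ := by
  intro σ ρ₁
  induction ρ₁ with
  | nil ε =>
    intro ρ₂ h
    cases ρ₂ with
    | nil => rfl
    | cons q h' rest' => simp [MPath.trace] at h
  | cons p h rest ih =>
    intro ρ₂ heq
    cases ρ₂ with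
    | nil => simp [MPath.trace] at heq
    | cons q h' rest' =>
      simp only [MPath.trace, List.cons.injEq, Prod.mk.injEq] at heq
      obtain ⟨⟨hp, hσ⟩, htr⟩ := heq
      subst hp
      subst hσ
      rw [ih rest' htr]

lemma pathSum {π : Policy} {σ : PState} (F : Finset (MPath π σ)) :
    ∑ ρ ∈ F, ρ.prob ≤ 1 := by
  classical
  have hinj : ∀ ρ ∈ F, ∀ ρ' ∈ F, ρ.trace = ρ'.trace → ρ = ρ' := fun ρ _ ρ' _ h =>
    MPath.trace_injective ρ ρ' h
  have h1 : ∑ ρ ∈ F, ρ.prob = ∑ l ∈ F.image MPath.trace, tprob l := by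
    rw [Finset.sum_image hinj]
    exact Finset.sum_congr rfl fun ρ _ => ρ.prob_eq_tprob
  rw [h1]
  refine traceSum π ((F.image MPath.trace).sup List.length) σ _ fun l hl => ?_
  obtain ⟨ρ, hρ, rfl⟩ := Finset.mem_image.mp hl
  exact ⟨ρ.vt_trace, Finset.le_sup hl⟩

lemma ind_nonneg (P : Prop) : 0 ≤ ind P := by unfold ind; split <;> norm_num
lemma ind_le_one (P : Prop) : ind P ≤ 1 := by unfold ind; split <;> norm_num
lemma ind_add_ind_not (P : Prop) : ind P + ind (¬ P) = 1 := by
  unfold ind; by_cases h : P <;> simp [h]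

lemma summable_reward {π : Policy} {σ : PState} {r : PVal → ℝ}
    (h0 : ∀ v, 0 ≤ r v) (h1 : ∀ v, r v ≤ 1) :
    Summable (fun ρ : MPath π σ => ρ.prob * r ρ.finalVal) := by
  refine summable_of_sum_le (c := 1) (fun ρ => mul_nonneg ρ.prob_nonneg (h0 _)) fun u => ?_
  calc ∑ ρ ∈ u, ρ.prob * r ρ.finalVal ≤ ∑ ρ ∈ u, ρ.prob :=
        Finset.sum_le_sum fun ρ _ => by
          calc ρ.prob * r ρ.finalVal ≤ ρ.prob * 1 :=
                mul_le_mul_of_nonneg_left (h1 _) ρ.prob_nonneg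
            _ = ρ.prob := mul_one _
    _ ≤ 1 := pathSum u

lemma tsum_le_one_of_sum_le {ι : Type*} {f : ι → ℝ} (hs : Summable f)
    (h : ∀ u : Finset ι, ∑ i ∈ u, f i ≤ 1) : ∑' i, f i ≤ 1 :=
  le_of_tendsto' hs.hasSum fun u => h u

lemma expReward_nonneg (π : Policy) (σ : PState) (r : PVal → ℝ) (h0 : ∀ v, 0 ≤ r v) :
    0 ≤ expReward π σ r :=
  tsum_nonneg fun ρ => mul_nonneg ρ.prob_nonneg (h0 _)

end PGCL


open PGCL

/-- Joni's theorem: if `ε ⊨ [s]_{p₁} φ` and `ε ⊨ [s]_{p₂} ¬φ`,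
    then for any fixed policy `π` the expected reward `E_{⟨ε,s⟩,π}[φ]` lies in
    the interval `[p₁(ε), 1 − p₂(ε)]`. -/
theorem joni (π : Policy) (ε : PVal) (η : LEnv) (s : Stmt) (φ : Formula)
    (p₁ p₂ : PVal → ℝ)
    (hp₁ : ∀ ε', p₁ ε' ∈ Set.Icc (0 : ℝ) 1) (hp₂ : ∀ ε', p₂ ε' ∈ Set.Icc (0 : ℝ) 1)
    (h₁ : Sat (.box s p₁ φ) ε η) (h₂ : Sat (.box s p₂ (.neg φ)) ε η) :
    expReward π (ε, s) (fun ε' => ind (Sat φ ε' η)) ∈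
      Set.Icc (p₁ ε) (1 - p₂ ε) := by
  have hind0 : ∀ (P : Prop), (0:ℝ) ≤ ind P := ind_nonneg
  have hind1 : ∀ (P : Prop), ind P ≤ (1:ℝ) := ind_le_one
  set f : MPath π (ε, s) → ℝ := fun ρ => ρ.prob * ind (Sat φ ρ.finalVal η) with hf
  set g : MPath π (ε, s) → ℝ := fun ρ => ρ.prob * ind (¬ Sat φ ρ.finalVal η) with hg
  have hsf : Summable f :=
    summable_reward (π := π) (σ := (ε, s)) (r := fun ε' => ind (Sat φ ε' η))
      (fun v => hind0 _) (fun v => hind1 _)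
  have hsg : Summable g :=
    summable_reward (π := π) (σ := (ε, s)) (r := fun ε' => ind (¬ Sat φ ε' η))
      (fun v => hind0 _) (fun v => hind1 _)
  have hbdd : BddBelow (Set.range fun π' : Policy =>
      expReward π' (ε, s) (fun ε' => ind (Sat φ ε' η))) := by
    refine ⟨0, ?_⟩
    rintro r ⟨π', rfl⟩
    exact expReward_nonneg π' (ε, s) (fun ε' => ind (Sat φ ε' η)) (fun v => hind0 _)
  have hbdd2 : BddBelow (Set.range fun π' : Policy =>
      expReward π' (ε, s) (fun ε' => ind (Sat (Formula.neg φ) ε' η))) := by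
    refine ⟨0, ?_⟩
    rintro r ⟨π', rfl⟩
    exact expReward_nonneg π' (ε, s) (fun ε' => ind (Sat (Formula.neg φ) ε' η))
      (fun v => hind0 _)
  have hlow : p₁ ε ≤ expReward π (ε, s) (fun ε' => ind (Sat φ ε' η)) :=
    le_trans h₁ (ciInf_le hbdd π)
  have hneg : p₂ ε ≤ expReward π (ε, s) (fun ε' => ind (Sat (Formula.neg φ) ε' η)) :=
    le_trans h₂ (ciInf_le hbdd2 π)
  have hgeq : expReward π (ε, s) (fun ε' => ind (Sat (Formula.neg φ) ε' η)) = ∑' ρ, g ρ :=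
    rfl
  have hfeq : expReward π (ε, s) (fun ε' => ind (Sat φ ε' η)) = ∑' ρ, f ρ := rfl
  have hAB : (∑' ρ, f ρ) + (∑' ρ, g ρ) ≤ 1 := by
    rw [← Summable.tsum_add hsf hsg]
    have heq : ∀ ρ : MPath π (ε, s), f ρ + g ρ = ρ.prob := by
      intro ρ
      simp only [hf, hg, ← mul_add, ind_add_ind_not, mul_one]
    rw [tsum_congr heq]
    have hsp : Summable (fun ρ : MPath π (ε, s) => ρ.prob) :=
      summable_of_sum_le (c := 1) (fun ρ => ρ.prob_nonneg) fun u => pathSum u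
    exact tsum_le_one_of_sum_le hsp fun u => pathSum u
  rw [hgeq] at hneg
  rw [Set.mem_Icc, hfeq]
  exact ⟨hfeq ▸ hlow, by linarith⟩
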